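/- Berge's theorem: a matching M in a finite simple graph G is a maximum matching if and only if G contains no M-augmenting path. -/

import Mathlib

/-- `M` is a matching: a set of pairwise non-incident edges, viewed as a
subgraph (a graph `M ≤ G` in which every vertex has at most one neighbor). -/
def IsMatching {V : Type*} (M : SimpleGraph V) : Prop :=
  ∀ v u w : V, M.Adj v u → M.Adj v w → u = w

/-- `v` is unmatched by `M`. -/
def Unmatched {V : Type*} (M : SimpleGraph V) (v : V) : Prop :=
  ∀ u : V, ¬ M.Adj v u

/-- `p` is an `M`-augmenting path in `G`: a path between two distinct
`M`-unmatched vertices whose edges alternate, starting (and hence ending)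
with a non-matching edge. -/
def IsAugPath {V : Type*} (G M : SimpleGraph V) {u v : V} (p : G.Walk u v) : Prop :=
  p.IsPath ∧ Unmatched M u ∧ Unmatched M v ∧ u ≠ v ∧
    ∀ (i : ℕ) (h : i < p.edges.length), (p.edges[i] ∈ M.edgeSet ↔ i % 2 = 1)

open SimpleGraph Walk

namespace Berge

variable {V : Type*}

lemma support_getElem {G : SimpleGraph V} :
    ∀ {u v : V} (p : G.Walk u v) (i : ℕ) (h : i < p.support.length),
      p.support[i] = p.getVert i
  | u, _, .nil, 0, _ => rfl
  | u, v, .cons a q, 0, h => rfl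
  | u, v, .cons a q, (i+1), h => by
      simpa [Walk.support_cons, Walk.getVert_cons_succ] using
        support_getElem q i (by simpa [Walk.support_cons] using h)

lemma edges_getElem {G : SimpleGraph V} :
    ∀ {u v : V} (p : G.Walk u v) (i : ℕ) (h : i < p.edges.length),
      p.edges[i] = s(p.getVert i, p.getVert (i+1))
  | u, _, .nil, i, h => by simp at h
  | u, v, .cons a q, 0, h => by
      simp [Walk.edges_cons, Walk.getVert_zero, Walk.getVert_cons_succ]
  | u, v, .cons a q, (i+1), h => by
      simpa [Walk.edges_cons, Walk.getVert_cons_succ] using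
        edges_getElem q i (by simpa [Walk.edges_cons] using h)

lemma getVert_inj {G : SimpleGraph V} {u v : V} {p : G.Walk u v} (hp : p.IsPath)
    {i j : ℕ} (hi : i ≤ p.length) (hj : j ≤ p.length)
    (h : p.getVert i = p.getVert j) : i = j := by
  have hs := hp.support_nodup
  have hi' : i < p.support.length := by rw [Walk.length_support]; omega
  have hj' : j < p.support.length := by rw [Walk.length_support]; omega
  exact hs.getElem_inj_iff.mp
    (by rw [support_getElem _ _ hi', support_getElem _ _ hj']; exact h)

lemma getVert_mem_support {G : SimpleGraph V} {u v : V} (p : G.Walk u v)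
    {i : ℕ} (hi : i ≤ p.length) : p.getVert i ∈ p.support :=
  Walk.mem_support_iff_exists_getVert.mpr ⟨i, rfl, hi⟩

lemma isPath_concat {G : SimpleGraph V} {u v w : V} {p : G.Walk u v} (hp : p.IsPath)
    (hadj : G.Adj v w) (hw : w ∉ p.support) : (p.concat hadj).IsPath := by
  rw [← Walk.isPath_reverse_iff, Walk.reverse_concat, Walk.cons_isPath_iff]
  exact ⟨hp.reverse, by simpa using hw⟩

lemma pick_odd {j n : ℕ} (h0 : 0 < j) (hn : j < n) :
    ∃ k, k < n ∧ k % 2 = 1 ∧ (j = k ∨ j = k + 1) := by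
  rcases Nat.even_or_odd j with h | h
  · have := Nat.even_iff.mp h
    exact ⟨j - 1, by omega, by omega, by omega⟩
  · have := Nat.odd_iff.mp h
    exact ⟨j, by omega, by omega, by omega⟩

lemma pick_even {j n : ℕ} (hn : j < n) :
    ∃ k, k < n ∧ k % 2 = 0 ∧ (j = k ∨ j = k + 1) := by
  rcases Nat.even_or_odd j with h | h
  · have := Nat.even_iff.mp h
    exact ⟨j, by omega, by omega, by omega⟩
  · have := Nat.odd_iff.mp h
    exact ⟨j - 1, by omega, by omega, by omega⟩

lemma card_filter_odd (n : ℕ) :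
    ((Finset.range n).filter (fun i => i % 2 = 1)).card = n / 2 := by
  induction n with
  | zero => simp
  | succ n ih =>
    rw [Finset.range_add_one, Finset.filter_insert]
    by_cases h : n % 2 = 1
    · rw [if_pos h, Finset.card_insert_of_notMem (by simp)]
      omega
    · rw [if_neg h]; omega

lemma card_filter_even (n : ℕ) :
    ((Finset.range n).filter (fun i => i % 2 = 0)).card = n - n / 2 := by
  induction n with
  | zero => simp
  | succ n ih =>
    rw [Finset.range_add_one, Finset.filter_insert]
    by_cases h : n % 2 = 0
    · rw [if_pos h, Finset.card_insert_of_notMem (by simp)]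
      omega
    · rw [if_neg h]; omega

lemma unmatched_iff {N : SimpleGraph V} {x : V} :
    Unmatched N x ↔ x ∉ N.support := by
  simp [Unmatched, N.mem_support]

lemma support_ncard [Fintype V] {N : SimpleGraph V} (hN : IsMatching N) :
    N.support.ncard = 2 * N.edgeSet.ncard := by
  classical
  have hfin : N.edgeSet.Finite := Set.toFinite _
  set E : Finset (Sym2 V) := hfin.toFinset with hE
  have hmemE : ∀ e, e ∈ E ↔ e ∈ N.edgeSet := fun e => hfin.mem_toFinset
  set S : Finset V := E.biUnion (fun e => Finset.univ.filter (fun x => x ∈ e)) with hS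
  have hcoe : (S : Set V) = N.support := by
    ext x
    constructor
    · intro hx
      rcases Finset.mem_biUnion.mp hx with ⟨e, he, hxe⟩
      rw [hmemE e] at he
      rcases Sym2.mem_iff_exists.mp (Finset.mem_filter.mp hxe).2 with ⟨y, rfl⟩
      exact N.mem_support.mpr ⟨y, N.mem_edgeSet.mp he⟩
    · intro hx
      rcases N.mem_support.mp hx with ⟨y, hxy⟩
      exact Finset.mem_biUnion.mpr ⟨s(x,y), (hmemE _).mpr (N.mem_edgeSet.mpr hxy),
        Finset.mem_filter.mpr ⟨Finset.mem_univ _, by simp⟩⟩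
  have hdisj : ∀ e1 ∈ E, ∀ e2 ∈ E, e1 ≠ e2 →
      Disjoint (Finset.univ.filter (fun x => x ∈ e1)) (Finset.univ.filter (fun x => x ∈ e2)) := by
    intro e1 h1 e2 h2 hne
    rw [Finset.disjoint_left]
    intro x hx1 hx2
    rcases Sym2.mem_iff_exists.mp (Finset.mem_filter.mp hx1).2 with ⟨y1, rfl⟩
    rcases Sym2.mem_iff_exists.mp (Finset.mem_filter.mp hx2).2 with ⟨y2, he2⟩
    rw [hmemE] at h1 h2
    have hadj1 : N.Adj x y1 := N.mem_edgeSet.mp h1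
    have hadj2 : N.Adj x y2 := N.mem_edgeSet.mp (by rwa [he2] at h2)
    exact hne (by rw [he2, hN x y1 y2 hadj1 hadj2])
  have hsum : ∀ e ∈ E, (Finset.univ.filter (fun x => x ∈ e)).card = 2 := by
    intro e
    induction e using Sym2.ind with
    | _ a b =>
      intro he
      have hadj : N.Adj a b := N.mem_edgeSet.mp ((hmemE _).mp he)
      have hset : Finset.univ.filter (fun x => x ∈ s(a,b)) = {a, b} := by
        ext x; simp [Sym2.mem_iff]
      rw [hset, Finset.card_pair hadj.ne]
  calc N.support.ncard = S.card := by rw [← hcoe, Set.ncard_coe_finset]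
    _ = ∑ e ∈ E, (Finset.univ.filter (fun x => x ∈ e)).card := Finset.card_biUnion hdisj
    _ = ∑ _e ∈ E, 2 := Finset.sum_congr rfl hsum
    _ = 2 * E.card := by rw [Finset.sum_const, smul_eq_mul, mul_comm]
    _ = 2 * N.edgeSet.ncard := by rw [Set.ncard_eq_toFinset_card _ hfin]

section Alternating

variable {G M M' : SimpleGraph V}

/-- Edges alternate: odd indices in `M`, even indices in `M'`. -/
def Alt (M M' : SimpleGraph V) {G : SimpleGraph V} {u v : V} (p : G.Walk u v) : Prop :=
  ∀ i (h : i < p.edges.length),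
    (p.edges[i] ∈ M.edgeSet ↔ i % 2 = 1) ∧ (p.edges[i] ∈ M'.edgeSet ↔ i % 2 = 0)

lemma notin_support_M {u v w : V} {p : G.Walk u v} (hp : p.IsPath) (ha : Alt M M' p)
    (hodd : p.length % 2 = 1) (hu : Unmatched M u) (hM : IsMatching M)
    (hvw : M.Adj v w) : w ∉ p.support := by
  intro hw
  obtain ⟨j, hjv, hjle⟩ := Walk.mem_support_iff_exists_getVert.mp hw
  by_cases hj0 : j = 0
  · subst hj0
    rw [Walk.getVert_zero] at hjv
    exact hu v (hjv ▸ hvw.symm)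
  by_cases hjn : j = p.length
  · subst hjn
    rw [Walk.getVert_length] at hjv
    exact M.irrefl (hjv ▸ hvw)
  · have hj1 : 0 < j := Nat.pos_of_ne_zero hj0
    have hj2 : j < p.length := lt_of_le_of_ne hjle hjn
    obtain ⟨k, hkn, hk2, hjk⟩ := pick_odd hj1 hj2
    have hke : k < p.edges.length := by rw [Walk.length_edges]; exact hkn
    have hmem : p.edges[k] ∈ M.edgeSet := (ha k hke).1.mpr hk2
    rw [edges_getElem p k hke] at hmem
    have hadj : M.Adj (p.getVert k) (p.getVert (k+1)) := M.mem_edgeSet.mp hmem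
    rcases hjk with hjk | hjk
    · rw [← hjk, hjv] at hadj
      have heq := hM w _ _ hadj hvw.symm
      have hfin : j + 1 = p.length := getVert_inj hp (by omega) le_rfl
        (by rw [heq, Walk.getVert_length])
      omega
    · rw [← hjk, hjv] at hadj
      have heq := hM w _ _ hadj.symm hvw.symm
      have hfin : k = p.length := getVert_inj hp (by omega) le_rfl
        (by rw [heq, Walk.getVert_length])
      omega

lemma notin_support_M' {u v w : V} {p : G.Walk u v} (hp : p.IsPath) (ha : Alt M M' p)
    (heven : p.length % 2 = 0) (hM' : IsMatching M')
    (hvw : M'.Adj v w) : w ∉ p.support := by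
  intro hw
  obtain ⟨j, hjv, hjle⟩ := Walk.mem_support_iff_exists_getVert.mp hw
  by_cases hjn : j = p.length
  · subst hjn
    rw [Walk.getVert_length] at hjv
    exact M'.irrefl (hjv ▸ hvw)
  · have hj2 : j < p.length := lt_of_le_of_ne hjle hjn
    obtain ⟨k, hkn, hk2, hjk⟩ := pick_even hj2
    have hke : k < p.edges.length := by rw [Walk.length_edges]; exact hkn
    have hmem : p.edges[k] ∈ M'.edgeSet := (ha k hke).2.mpr hk2
    rw [edges_getElem p k hke] at hmem
    have hadj : M'.Adj (p.getVert k) (p.getVert (k+1)) := M'.mem_edgeSet.mp hmem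
    rcases hjk with hjk | hjk
    · rw [← hjk, hjv] at hadj
      have heq := hM' w _ _ hadj hvw.symm
      have hfin : j + 1 = p.length := getVert_inj hp (by omega) le_rfl
        (by rw [heq, Walk.getVert_length])
      omega
    · rw [← hjk, hjv] at hadj
      have heq := hM' w _ _ hadj.symm hvw.symm
      have hfin : k = p.length := getVert_inj hp (by omega) le_rfl
        (by rw [heq, Walk.getVert_length])
      omega

lemma alt_concat {u v w : V} {p : G.Walk u v} (ha : Alt M M' p) (hadj : G.Adj v w)
    (h1 : s(v,w) ∈ M.edgeSet ↔ p.length % 2 = 1)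
    (h2 : s(v,w) ∈ M'.edgeSet ↔ p.length % 2 = 0) :
    Alt M M' (p.concat hadj) := by
  intro i h
  have hec : (p.concat hadj).edges = p.edges ++ [s(v,w)] := by
    rw [Walk.edges_concat, List.concat_eq_append]
  simp only [hec] at h ⊢
  rcases Nat.lt_or_ge i p.edges.length with hi | hi
  · rw [List.getElem_append_left hi]
    exact ha i hi
  · have hil : i = p.edges.length := by
      rw [List.length_append, List.length_singleton] at h; omega
    subst hil
    have hg : (p.edges ++ [s(v,w)])[p.edges.length]'h = s(v,w) := by
      rw [List.getElem_append_right (le_refl _)]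
      simp
    rw [hg, Walk.length_edges]
    exact ⟨h1, h2⟩

lemma chase_inj (hM : IsMatching M) (hM' : IsMatching M') {u1 u2 v1 v2 : V}
    (p1 : G.Walk u1 v1) (p2 : G.Walk u2 v2) (ha1 : Alt M M' p1) (ha2 : Alt M M' p2)
    (he1 : p1.length % 2 = 0) (he2 : p2.length % 2 = 0)
    (hu1 : Unmatched M u1) (hu2 : Unmatched M u2) (hv : v1 = v2) : u1 = u2 := by
  have key : ∀ i, i ≤ p1.length → i ≤ p2.length →
      p1.getVert (p1.length - i) = p2.getVert (p2.length - i) := by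
    intro i
    induction i with
    | zero =>
      intro _ _
      simpa [Walk.getVert_length] using hv
    | succ i ih =>
      intro h1 h2
      have hih := ih (by omega) (by omega)
      have hk1 : p1.length - (i+1) < p1.edges.length := by rw [Walk.length_edges]; omega
      have hk2 : p2.length - (i+1) < p2.edges.length := by rw [Walk.length_edges]; omega
      have hs1 : p1.length - (i+1) + 1 = p1.length - i := by omega
      have hs2 : p2.length - (i+1) + 1 = p2.length - i := by omega
      rcases Nat.even_or_odd i with hi | hi
      · have hie : i % 2 = 0 := Nat.even_iff.mp hi
        have hm1 : (p1.length - (i+1)) % 2 = 1 := by omega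
        have hm2 : (p2.length - (i+1)) % 2 = 1 := by omega
        have e1 : M.Adj (p1.getVert (p1.length - i)) (p1.getVert (p1.length - (i+1))) := by
          have hmem := (ha1 _ hk1).1.mpr hm1
          rw [edges_getElem p1 _ hk1] at hmem
          rw [← hs1]
          exact (M.mem_edgeSet.mp hmem).symm
        have e2 : M.Adj (p2.getVert (p2.length - i)) (p2.getVert (p2.length - (i+1))) := by
          have hmem := (ha2 _ hk2).1.mpr hm2
          rw [edges_getElem p2 _ hk2] at hmem
          rw [← hs2]
          exact (M.mem_edgeSet.mp hmem).symm
        rw [hih] at e1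
        exact hM _ _ _ e1 e2
      · have hie : i % 2 = 1 := Nat.odd_iff.mp hi
        have hm1 : (p1.length - (i+1)) % 2 = 0 := by omega
        have hm2 : (p2.length - (i+1)) % 2 = 0 := by omega
        have e1 : M'.Adj (p1.getVert (p1.length - i)) (p1.getVert (p1.length - (i+1))) := by
          have hmem := (ha1 _ hk1).2.mpr hm1
          rw [edges_getElem p1 _ hk1] at hmem
          rw [← hs1]
          exact (M'.mem_edgeSet.mp hmem).symm
        have e2 : M'.Adj (p2.getVert (p2.length - i)) (p2.getVert (p2.length - (i+1))) := by
          have hmem := (ha2 _ hk2).2.mpr hm2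
          rw [edges_getElem p2 _ hk2] at hmem
          rw [← hs2]
          exact (M'.mem_edgeSet.mp hmem).symm
        rw [hih] at e1
        exact hM' _ _ _ e1 e2
  have hn : p1.length = p2.length := by
    by_contra hne
    rcases Nat.lt_or_ge p1.length p2.length with hlt | hge
    · have h1 := key p1.length le_rfl (le_of_lt hlt)
      rw [Nat.sub_self, Walk.getVert_zero] at h1
      have hk : p2.length - p1.length - 1 < p2.edges.length := by rw [Walk.length_edges]; omega
      have hm : (p2.length - p1.length - 1) % 2 = 1 := by omega
      have hmem := (ha2 _ hk).1.mpr hm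
      rw [edges_getElem p2 _ hk] at hmem
      have hplus : p2.length - p1.length - 1 + 1 = p2.length - p1.length := by omega
      have hadj : M.Adj (p2.getVert (p2.length - p1.length))
          (p2.getVert (p2.length - p1.length - 1)) := by
        rw [← hplus]
        exact (M.mem_edgeSet.mp hmem).symm
      rw [← h1] at hadj
      exact hu1 _ hadj
    · have hlt : p2.length < p1.length := by omega
      have h1 := key p2.length (le_of_lt hlt) le_rfl
      rw [Nat.sub_self, Walk.getVert_zero] at h1
      have hk : p1.length - p2.length - 1 < p1.edges.length := by rw [Walk.length_edges]; omega
      have hm : (p1.length - p2.length - 1) % 2 = 1 := by omega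
      have hmem := (ha1 _ hk).1.mpr hm
      rw [edges_getElem p1 _ hk] at hmem
      have hplus : p1.length - p2.length - 1 + 1 = p1.length - p2.length := by omega
      have hadj : M.Adj (p1.getVert (p1.length - p2.length))
          (p1.getVert (p1.length - p2.length - 1)) := by
        rw [← hplus]
        exact (M.mem_edgeSet.mp hmem).symm
      rw [h1] at hadj
      exact hu2 _ hadj
  have hfin := key p1.length le_rfl (by omega)
  rw [Nat.sub_self, Walk.getVert_zero, show p2.length - p1.length = 0 by omega,
    Walk.getVert_zero] at hfin
  exact hfin

lemma chase [Fintype V] (hMG : M ≤ G) (hM'G : M' ≤ G)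
    (hM : IsMatching M) (hM' : IsMatching M')
    (hnoaug : ¬ ∃ (u : V) (v : V) (p : G.Walk u v), IsAugPath G M p)
    {u : V} (hu : Unmatched M u) (hu' : ¬ Unmatched M' u) :
    ∃ (v : V) (p : G.Walk u v), Alt M M' p ∧ p.length % 2 = 0 ∧
      Unmatched M' v ∧ ¬ Unmatched M v := by
  classical
  set P : ℕ → Prop := fun m =>
    ∃ (v : V) (p : G.Walk u v), p.IsPath ∧ Alt M M' p ∧ p.length = m with hPdef
  have hP0 : P 0 := ⟨u, Walk.nil, Walk.IsPath.nil, fun i h => by simp at h, rfl⟩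
  have hPN : P (Nat.findGreatest P (Fintype.card V)) :=
    Nat.findGreatest_spec (Nat.zero_le _) hP0
  obtain ⟨v, p, hp, ha, hlen⟩ := hPN
  have hmax : ¬ P (p.length + 1) := by
    intro hP1
    have hle : p.length + 1 ≤ Fintype.card V := by
      obtain ⟨v', p', hp', _, hl'⟩ := hP1
      have := hp'.length_lt
      omega
    have := Nat.le_findGreatest hle hP1
    omega
  have hev : p.length % 2 = 0 := by
    by_contra hodd'
    have hodd : p.length % 2 = 1 := by omega
    by_cases hv : Unmatched M v
    · apply hnoaug
      refine ⟨u, v, p, hp, hu, hv, ?_, fun i h => (ha i h).1⟩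
      intro huv
      have h0 : p.getVert 0 = p.getVert p.length := by
        rw [Walk.getVert_zero, Walk.getVert_length, huv]
      have := getVert_inj hp (Nat.zero_le _) le_rfl h0
      omega
    · simp only [Unmatched, not_forall, not_not] at hv
      obtain ⟨w, hvw⟩ := hv
      have hwns := notin_support_M hp ha hodd hu hM hvw
      have hsvw : s(v,w) ∉ M'.edgeSet := by
        intro hmem
        have hn1 : p.length - 1 < p.edges.length := by rw [Walk.length_edges]; omega
        have hm0 : (p.length - 1) % 2 = 0 := by omega
        have hM'e := (ha _ hn1).2.mpr hm0
        rw [edges_getElem p _ hn1] at hM'e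
        have hvlast : p.getVert (p.length - 1 + 1) = v := by
          rw [show p.length - 1 + 1 = p.length by omega, Walk.getVert_length]
        have hadj1 : M'.Adj v (p.getVert (p.length - 1)) := by
          have h' := (M'.mem_edgeSet.mp hM'e).symm
          rwa [hvlast] at h'
        have hadj2 : M'.Adj v w := M'.mem_edgeSet.mp hmem
        have heq := hM' v _ _ hadj1 hadj2
        exact hwns (heq ▸ getVert_mem_support p (by omega))
      apply hmax
      exact ⟨w, p.concat (hMG hvw), isPath_concat hp (hMG hvw) hwns,
        alt_concat ha (hMG hvw)
          (iff_of_true (M.mem_edgeSet.mpr hvw) hodd)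
          (iff_of_false hsvw (by omega)),
        by rw [Walk.length_concat]⟩
  have hv' : Unmatched M' v := by
    by_contra hv'
    simp only [Unmatched, not_forall, not_not] at hv'
    obtain ⟨w, hvw⟩ := hv'
    have hwns := notin_support_M' hp ha hev hM' hvw
    have hsvw : s(v,w) ∉ M.edgeSet := by
      rcases Nat.eq_zero_or_pos p.length with h0 | h0
      · have huv : u = v := by
          have h1 : p.getVert 0 = v := Walk.getVert_of_length_le p (by omega)
          rw [Walk.getVert_zero] at h1
          exact h1
        intro hmem
        exact hu w (by rw [huv]; exact M.mem_edgeSet.mp hmem)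
      · intro hmem
        have hn1 : p.length - 1 < p.edges.length := by rw [Walk.length_edges]; omega
        have hm1 : (p.length - 1) % 2 = 1 := by omega
        have hMe := (ha _ hn1).1.mpr hm1
        rw [edges_getElem p _ hn1] at hMe
        have hvlast : p.getVert (p.length - 1 + 1) = v := by
          rw [show p.length - 1 + 1 = p.length by omega, Walk.getVert_length]
        have hadj1 : M.Adj v (p.getVert (p.length - 1)) := by
          have h' := (M.mem_edgeSet.mp hMe).symm
          rwa [hvlast] at h'
        have hadj2 : M.Adj v w := M.mem_edgeSet.mp hmem
        have heq := hM v _ _ hadj1 hadj2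
        exact hwns (heq ▸ getVert_mem_support p (by omega))
    apply hmax
    exact ⟨w, p.concat (hM'G hvw), isPath_concat hp (hM'G hvw) hwns,
      alt_concat ha (hM'G hvw)
        (iff_of_false hsvw (by omega))
        (iff_of_true (M'.mem_edgeSet.mpr hvw) hev),
      by rw [Walk.length_concat]⟩
  have hvM : ¬ Unmatched M v := by
    rcases Nat.eq_zero_or_pos p.length with h0 | h0
    · exfalso
      have huv : u = v := by
        have h1 : p.getVert 0 = v := Walk.getVert_of_length_le p (by omega)
        rw [Walk.getVert_zero] at h1
        exact h1
      exact hu' (huv ▸ hv')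
    · intro hvM
      have hn1 : p.length - 1 < p.edges.length := by rw [Walk.length_edges]; omega
      have hm1 : (p.length - 1) % 2 = 1 := by omega
      have hMe := (ha _ hn1).1.mpr hm1
      rw [edges_getElem p _ hn1] at hMe
      have hvlast : p.getVert (p.length - 1 + 1) = v := by
        rw [show p.length - 1 + 1 = p.length by omega, Walk.getVert_length]
      have hadj1 : M.Adj v (p.getVert (p.length - 1)) := by
        have h' := (M.mem_edgeSet.mp hMe).symm
        rwa [hvlast] at h'
      exact hvM _ hadj1
  exact ⟨v, p, ha, hev, hv', hvM⟩

end Alternating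

section Forward

variable {G M : SimpleGraph V}

/-- The symmetric difference of `M` with the edges of a walk `p` in `G`. -/
def augGraph (G M : SimpleGraph V) {u v : V} (p : G.Walk u v) : SimpleGraph V where
  Adj a b := (M.Adj a b ∧ s(a,b) ∉ p.edges) ∨
    (G.Adj a b ∧ s(a,b) ∈ p.edges ∧ s(a,b) ∉ M.edgeSet)
  symm := by
    constructor
    intro a b h
    rcases h with ⟨h1, h2⟩ | ⟨h1, h2, h3⟩
    · exact Or.inl ⟨h1.symm, by rwa [Sym2.eq_swap]⟩
    · exact Or.inr ⟨h1.symm, by rwa [Sym2.eq_swap], by rwa [Sym2.eq_swap]⟩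
  loopless := by
    constructor
    intro a h
    rcases h with ⟨h1, _⟩ | ⟨h1, _, _⟩
    · exact M.irrefl h1
    · exact G.irrefl h1

lemma augGraph_adj {u v : V} {p : G.Walk u v} {a b : V} :
    (augGraph G M p).Adj a b ↔ (M.Adj a b ∧ s(a,b) ∉ p.edges) ∨
      (G.Adj a b ∧ s(a,b) ∈ p.edges ∧ s(a,b) ∉ M.edgeSet) := Iff.rfl

lemma aug_bigger [Fintype V] (hMG : M ≤ G) (hM : IsMatching M)
    {u v : V} (p : G.Walk u v) (haug : IsAugPath G M p) :
    ∃ M'' : SimpleGraph V, M'' ≤ G ∧ IsMatching M'' ∧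
      M''.edgeSet.ncard = M.edgeSet.ncard + 1 := by
  classical
  obtain ⟨hp, hu, hv, huv, halt⟩ := haug
  have hlen1 : 1 ≤ p.length := by
    by_contra h
    apply huv
    have h1 : p.getVert 0 = v := Walk.getVert_of_length_le p (by omega)
    rw [Walk.getVert_zero] at h1
    exact h1
  have hodd : p.length % 2 = 1 := by
    have hn1 : p.length - 1 < p.edges.length := by rw [Walk.length_edges]; omega
    have : (p.length - 1) % 2 = 0 := by
      by_contra hc
      have hm := (halt _ hn1).mpr (by omega)
      rw [edges_getElem p _ hn1] at hm
      have hvlast : p.getVert (p.length - 1 + 1) = v := by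
        rw [show p.length - 1 + 1 = p.length by omega, Walk.getVert_length]
      have h' := (M.mem_edgeSet.mp hm).symm
      rw [hvlast] at h'
      exact hv _ h'
    omega
  -- a vertex incident to an off-path matching edge is incident to no path edge
  have hmixed : ∀ a b' c' : V, M.Adj a b' → s(a,b') ∉ p.edges →
      s(a,c') ∈ p.edges → False := by
    intro a b' c' hM1 hnp hpc
    obtain ⟨k, hk, hke⟩ := List.getElem_of_mem hpc
    have hsym : s(p.getVert k, p.getVert (k+1)) = s(a, c') := by
      rw [← edges_getElem p k hk, hke]
    obtain ⟨j, hjle, hja⟩ : ∃ j, j ≤ p.length ∧ p.getVert j = a := by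
      have hkl : k < p.length := by rw [← Walk.length_edges]; exact hk
      rcases Sym2.eq_iff.mp hsym with ⟨h1, _⟩ | ⟨_, h2⟩
      · exact ⟨k, by omega, h1⟩
      · exact ⟨k+1, by omega, h2⟩
    by_cases hj0 : j = 0
    · subst hj0
      rw [Walk.getVert_zero] at hja
      exact hu b' (hja ▸ hM1)
    by_cases hjn : j = p.length
    · rw [hjn, Walk.getVert_length] at hja
      exact hv b' (hja ▸ hM1)
    · obtain ⟨k', hk'n, hk'2, hjk⟩ := pick_odd (n := p.length)
        (Nat.pos_of_ne_zero hj0) (lt_of_le_of_ne hjle hjn)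
      have hk'e : k' < p.edges.length := by rw [Walk.length_edges]; exact hk'n
      have hin : p.edges[k'] ∈ M.edgeSet := (halt k' hk'e).mpr hk'2
      rw [edges_getElem p k' hk'e] at hin
      have hadj : M.Adj (p.getVert k') (p.getVert (k'+1)) := M.mem_edgeSet.mp hin
      rcases hjk with hjk | hjk
      · rw [← hjk, hja] at hadj
        have hb := hM a _ _ hadj hM1
        apply hnp
        have hje : j < p.edges.length := by rw [Walk.length_edges]; omega
        have heq : p.edges[j] = s(a, b') := by
          rw [edges_getElem p j hje, hja, hb]
        rw [← heq]
        exact List.getElem_mem _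
      · rw [← hjk, hja] at hadj
        have hb := hM a _ _ hadj.symm hM1
        apply hnp
        have heq : p.edges[k'] = s(a, b') := by
          rw [edges_getElem p k' hk'e, hb, ← hjk, hja]
          exact Sym2.eq_swap
        rw [← heq]
        exact List.getElem_mem _
  have hmatch : IsMatching (augGraph G M p) := by
    intro a b c hab hac
    rw [augGraph_adj] at hab hac
    rcases hab with ⟨hab1, hab2⟩ | ⟨habG, habp, habM⟩ <;>
      rcases hac with ⟨hac1, hac2⟩ | ⟨hacG, hacp, hacM⟩
    · exact hM a b c hab1 hac1
    · exact (hmixed a b c hab1 hab2 hacp).elim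
    · exact (hmixed a c b hac1 hac2 habp).elim
    · obtain ⟨k, hk, hke⟩ := List.getElem_of_mem habp
      obtain ⟨l, hl, hle⟩ := List.getElem_of_mem hacp
      have hkeven : k % 2 = 0 := by
        have h1 : ¬ k % 2 = 1 := fun hh => habM (hke ▸ (halt k hk).mpr hh)
        omega
      have hleven : l % 2 = 0 := by
        have h1 : ¬ l % 2 = 1 := fun hh => hacM (hle ▸ (halt l hl).mpr hh)
        omega
      have hpos : ∀ {m : ℕ} (hm : m < p.edges.length) {x y : V}, p.edges[m] = s(x,y) →
          ∃ i, (i = m ∨ i = m+1) ∧ p.getVert i = x := by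
        intro m hm x y hxy
        have hsym : s(p.getVert m, p.getVert (m+1)) = s(x,y) := by
          rw [← edges_getElem p m hm, hxy]
        rcases Sym2.eq_iff.mp hsym with ⟨h1, _⟩ | ⟨_, h2⟩
        · exact ⟨m, Or.inl rfl, h1⟩
        · exact ⟨m+1, Or.inr rfl, h2⟩
      obtain ⟨jk, hjk, hjka⟩ := hpos hk hke
      obtain ⟨jl, hjl, hjla⟩ := hpos hl hle
      have hkl : k < p.length := by rw [← Walk.length_edges]; exact hk
      have hll : l < p.length := by rw [← Walk.length_edges]; exact hl
      have hjkl : jk = jl := getVert_inj hp (by omega) (by omega)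
        (by rw [hjka, hjla])
      have hkleq : k = l := by omega
      subst hkleq
      have hbc : s(a,b) = s(a,c) := hke.symm.trans hle
      rcases Sym2.eq_iff.mp hbc with ⟨_, h⟩ | ⟨h1, h2⟩
      · exact h
      · exact h2.trans h1
  refine ⟨augGraph G M p, ?_, hmatch, ?_⟩
  · intro a b h
    rcases h with ⟨h1, _⟩ | ⟨h1, _, _⟩
    · exact hMG h1
    · exact h1
  · set Pe : Set (Sym2 V) := {e | e ∈ p.edges} with hPe
    have hedge : (augGraph G M p).edgeSet = (M.edgeSet \ Pe) ∪ (Pe \ M.edgeSet) := by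
      ext e
      induction e using Sym2.ind with
      | _ a b =>
        rw [SimpleGraph.mem_edgeSet, augGraph_adj]
        simp only [Set.mem_union, Set.mem_diff, hPe, Set.mem_setOf_eq]
        constructor
        · rintro (⟨h1, h2⟩ | ⟨h1, h2, h3⟩)
          · exact Or.inl ⟨M.mem_edgeSet.mpr h1, h2⟩
          · exact Or.inr ⟨h2, h3⟩
        · rintro (⟨h1, h2⟩ | ⟨h1, h2⟩)
          · exact Or.inl ⟨M.mem_edgeSet.mp h1, h2⟩
          · exact Or.inr ⟨G.mem_edgeSet.mp (p.edges_subset_edgeSet h1), h1, h2⟩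
    have hnd := hp.isTrail.edges_nodup
    letI : Inhabited (Sym2 V) := ⟨s(u,u)⟩
    have key : ∀ (S : Set (Sym2 V)) (r : ℕ),
        (∀ i (h : i < p.edges.length), (p.edges[i] ∈ S ↔ i % 2 = r)) →
        (Pe ∩ S).ncard = ((Finset.range p.length).filter (fun i => i % 2 = r)).card := by
      intro S r hS
      have hfilter : Pe ∩ S = ↑((p.edges.toFinset).filter (fun e => e ∈ S)) := by
        ext e
        simp only [Set.mem_inter_iff, hPe, Set.mem_setOf_eq, Finset.coe_filter,
          List.mem_toFinset]
      rw [hfilter, Set.ncard_coe_finset]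
      have himg : ((Finset.range p.length).filter (fun i => i % 2 = r)).image
          (fun i => p.edges.getD i default) = (p.edges.toFinset).filter (fun e => e ∈ S) := by
        ext e
        simp only [Finset.mem_image, Finset.mem_filter, Finset.mem_range, List.mem_toFinset]
        constructor
        · rintro ⟨i, ⟨hi, hir⟩, rfl⟩
          have hi' : i < p.edges.length := by rw [Walk.length_edges]; exact hi
          rw [List.getD_eq_getElem _ _ hi']
          exact ⟨List.getElem_mem _, (hS i hi').mpr hir⟩
        · rintro ⟨he, heS⟩
          obtain ⟨i, hi, hie⟩ := List.getElem_of_mem he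
          refine ⟨i, ⟨by rw [← Walk.length_edges]; exact hi,
            (hS i hi).mp (by rw [hie]; exact heS)⟩, ?_⟩
          rw [List.getD_eq_getElem _ _ hi, hie]
      rw [← himg, Finset.card_image_of_injOn]
      intro i hi j hj hij
      simp only [Finset.coe_filter, Set.mem_setOf_eq, Finset.mem_range] at hi hj
      have hi' : i < p.edges.length := by rw [Walk.length_edges]; exact hi.1
      have hj' : j < p.edges.length := by rw [Walk.length_edges]; exact hj.1
      have hij' : p.edges.getD i default = p.edges.getD j default := hij
      rw [List.getD_eq_getElem _ _ hi', List.getD_eq_getElem _ _ hj'] at hij'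
      exact hnd.getElem_inj_iff.mp hij'
    have h1 : (Pe ∩ M.edgeSet).ncard = p.length / 2 := by
      rw [key M.edgeSet 1 (fun i h => halt i h), card_filter_odd]
    have h2 : (Pe ∩ M.edgeSetᶜ).ncard = p.length - p.length / 2 := by
      rw [key M.edgeSetᶜ 0 ?_, card_filter_even]
      intro i h
      have hiff := halt i h
      simp only [Set.mem_compl_iff]
      rw [hiff]
      omega
    have hdisj : Disjoint (M.edgeSet \ Pe) (Pe \ M.edgeSet) := by
      rw [Set.disjoint_left]
      rintro e ⟨ha1, ha2⟩ ⟨hb1, hb2⟩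
      exact ha2 hb1
    have hun : (augGraph G M p).edgeSet.ncard
        = (M.edgeSet \ Pe).ncard + (Pe \ M.edgeSet).ncard := by
      rw [hedge, Set.ncard_union_eq hdisj (Set.toFinite _) (Set.toFinite _)]
    have hMsplit := Set.ncard_inter_add_ncard_diff_eq_ncard M.edgeSet Pe (Set.toFinite _)
    have hPM : (M.edgeSet ∩ Pe).ncard = (Pe ∩ M.edgeSet).ncard := by rw [Set.inter_comm]
    have hdiffc : Pe \ M.edgeSet = Pe ∩ M.edgeSetᶜ := Set.diff_eq _ _
    rw [hun, hdiffc, h2]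
    omega

end Forward

end Berge

/-- Berge's theorem: a matching `M` in `G` is maximum iff `G` has no
`M`-augmenting path. -/
theorem berge {V : Type*} [Fintype V] (G M : SimpleGraph V)
    (hMG : M ≤ G) (hM : IsMatching M) :
    (∀ M' : SimpleGraph V, M' ≤ G → IsMatching M' →
        M'.edgeSet.ncard ≤ M.edgeSet.ncard) ↔
      ¬ ∃ (u v : V) (p : G.Walk u v), IsAugPath G M p := by
  constructor
  · intro hmaxM
    rintro ⟨u, v, p, hpaug⟩
    obtain ⟨M'', hle, hm, hcard⟩ := Berge.aug_bigger hMG hM p hpaug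
    have := hmaxM M'' hle hm
    omega
  · intro hnoaug M' hM'G hM'
    classical
    have hMs := Berge.support_ncard hM
    have hM's := Berge.support_ncard hM'
    have hchase : ∀ u ∈ M'.support \ M.support, ∃ w,
        w ∈ M.support \ M'.support ∧
        ∃ p : G.Walk u w, Berge.Alt M M' p ∧ p.length % 2 = 0 := by
      intro u hu
      have hu1 : Unmatched M u := Berge.unmatched_iff.mpr hu.2
      have hu2 : ¬ Unmatched M' u := fun h => (Berge.unmatched_iff.mp h) hu.1
      obtain ⟨w, pw, ha, he, hw1, hw2⟩ :=
        Berge.chase hMG hM'G hM hM' hnoaug hu1 hu2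
      exact ⟨w, ⟨by by_contra hc; exact hw2 (Berge.unmatched_iff.mpr hc),
        fun hc => (Berge.unmatched_iff.mp hw1) hc⟩, pw, ha, he⟩
    have hAB : (M'.support \ M.support).ncard ≤ (M.support \ M'.support).ncard := by
      set f : V → V := fun u =>
        if h : u ∈ M'.support \ M.support then (hchase u h).choose else u with hf
      apply Set.ncard_le_ncard_of_injOn f
      · intro a ha
        simp only [hf, dif_pos ha]
        exact ((hchase a ha).choose_spec).1
      · intro a1 h1 a2 h2 hfe
        simp only [hf, dif_pos h1, dif_pos h2] at hfe
        obtain ⟨_, p1, ha1, he1⟩ := (hchase a1 h1).choose_spec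
        obtain ⟨_, p2, ha2, he2⟩ := (hchase a2 h2).choose_spec
        exact Berge.chase_inj hM hM' p1 p2 ha1 ha2 he1 he2
          (Berge.unmatched_iff.mpr h1.2) (Berge.unmatched_iff.mpr h2.2) hfe
    have h1 := Set.ncard_inter_add_ncard_diff_eq_ncard M'.support M.support
      (Set.toFinite _)
    have h2 := Set.ncard_inter_add_ncard_diff_eq_ncard M.support M'.support
      (Set.toFinite _)
    have hint : (M'.support ∩ M.support).ncard = (M.support ∩ M'.support).ncard := by
      rw [Set.inter_comm]
    omega
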